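/- The generalized Young inequality ‖f ∗ g‖_{L^{p,s}} ≤ C ‖f‖_{L^{q,l}} ‖g‖_{L^r} with 1/p + 1 = 1/q + 1/r can fail when l > s: specifically, if for some 0 < s < l ≤ ∞ and 1 < q < ∞ the inequality ‖f ∗ g‖_{L^{q,s}(ℝⁿ)} ≤ C ‖f‖_{L^{q,l}(ℝⁿ)} ‖g‖_{L^1(ℝⁿ)} held for all f ∈ L^{q,l} and all g ∈ L^1, then by testing against approximate identities one would obtain ‖f‖_{L^{q,s}(ℝⁿ)} ≤ C ‖f‖_{L^{q,l}(ℝⁿ)} for all f ∈ L^{q,l}(ℝⁿ), contradicting the strict inclusion L^{q,s}(ℝⁿ) ⊊ L^{q,l}(ℝⁿ). -/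

import Mathlib

open MeasureTheory ENNReal Set
open scoped FourierTransform NNReal

variable {α : Type*} [MeasurableSpace α]

/-- Distribution function of an `ℝ≥0∞`-valued function. -/
noncomputable def distFn (μ : Measure α) (f : α → ℝ≥0∞) (t : ℝ≥0∞) : ℝ≥0∞ :=
  μ {x | t < f x}

/-- Decreasing rearrangement. -/
noncomputable def rearr (μ : Measure α) (f : α → ℝ≥0∞) (s : ℝ≥0∞) : ℝ≥0∞ :=
  sInf {t : ℝ≥0∞ | distFn μ f t ≤ s}

/-- Lorentz quasinorm `‖f‖_{L^{p,q}(μ)}` defined via the decreasing rearrangement. -/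
noncomputable def lorentzNorm (μ : Measure α) (f : α → ℝ≥0∞) (p q : ℝ≥0∞) : ℝ≥0∞ :=
  if q = ∞ then ⨆ t : ℝ≥0∞, t ^ (p⁻¹).toReal * rearr μ f t
  else (∫⁻ t in Ioi (0 : ℝ),
      (ENNReal.ofReal t ^ (p⁻¹).toReal * rearr μ f (ENNReal.ofReal t)) ^ q.toReal
        / ENNReal.ofReal t) ^ (q⁻¹).toReal

/-- Lorentz quasinorm of a vector-valued function. -/
noncomputable def eLorentzNorm {E : Type*} [NNNorm E] (μ : Measure α) (f : α → E)
    (p q : ℝ≥0∞) : ℝ≥0∞ :=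
  lorentzNorm μ (fun x => (‖f x‖₊ : ℝ≥0∞)) p q

/-- Centered Hardy–Littlewood maximal function. -/
noncomputable def maximalFn {E : Type*} [NNNorm E] {n : ℕ}
    (f : EuclideanSpace ℝ (Fin n) → E) (x : EuclideanSpace ℝ (Fin n)) : ℝ≥0∞ :=
  ⨆ r : ℝ, ⨆ _ : 0 < r,
    (volume (Metric.ball (0 : EuclideanSpace ℝ (Fin n)) r))⁻¹ *
      ∫⁻ y in Metric.ball (0 : EuclideanSpace ℝ (Fin n)) r, (‖f (x - y)‖₊ : ℝ≥0∞)

/-- Convolution. -/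
noncomputable def convFn {n : ℕ} (f g : EuclideanSpace ℝ (Fin n) → ℂ)
    (x : EuclideanSpace ℝ (Fin n)) : ℂ :=
  ∫ y, f (x - y) * g y

/-! ### Auxiliary material for the counterexample -/

namespace YoungAux

lemma rearr_le_of_distFn_le {μ : Measure α} {f : α → ℝ≥0∞} {a t : ℝ≥0∞}
    (h : distFn μ f a ≤ t) : rearr μ f t ≤ a := sInf_le h

lemma le_rearr_of_distFn {μ : Measure α} {f : α → ℝ≥0∞} {a t : ℝ≥0∞}
    (h : ∀ b, distFn μ f b ≤ t → a ≤ b) : a ≤ rearr μ f t := le_sInf h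

lemma rearr_top (μ : Measure α) (f : α → ℝ≥0∞) : rearr μ f ⊤ = 0 := by
  have h : {t : ℝ≥0∞ | distFn μ f t ≤ ⊤} = univ := eq_univ_of_forall fun t => (le_top : distFn _ _ t ≤ ⊤)
  rw [rearr, h, sInf_univ]
  rfl

/-- The decreasing coefficient sequence `c k = e^{-kβ} k^{-σ}`. -/
noncomputable def cseq (β σ : ℝ) (k : ℕ) : ℝ := Real.exp (-(k:ℝ) * β) * (k:ℝ) ^ (-σ)

/-- The radial profile: a step function equal to `cseq (⌊log u⌋₊ + 1)` for `u ≥ 0`. -/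
noncomputable def psi (β σ : ℝ) (u : ℝ) : ℝ :=
  if u < 0 then 0 else cseq β σ (⌊Real.log u⌋₊ + 1)

lemma cseq_nonneg (β σ : ℝ) (k : ℕ) : 0 ≤ cseq β σ k :=
  mul_nonneg (Real.exp_pos _).le (Real.rpow_nonneg (Nat.cast_nonneg k) _)

lemma cseq_pos (β σ : ℝ) {k : ℕ} (hk : 1 ≤ k) : 0 < cseq β σ k := by
  have : (0:ℝ) < (k:ℝ) := by exact_mod_cast hk
  exact mul_pos (Real.exp_pos _) (Real.rpow_pos_of_pos this _)

lemma cseq_le_one {β σ : ℝ} (hβ : 0 ≤ β) (hσ : 0 ≤ σ) {k : ℕ} (hk : 1 ≤ k) :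
    cseq β σ k ≤ 1 := by
  have h1 : Real.exp (-(k:ℝ) * β) ≤ 1 := by
    rw [Real.exp_le_one_iff]
    have : (0:ℝ) ≤ (k:ℝ) := Nat.cast_nonneg k
    nlinarith
  have h2 : (k:ℝ) ^ (-σ) ≤ 1 :=
    Real.rpow_le_one_of_one_le_of_nonpos (by exact_mod_cast hk) (neg_nonpos.mpr hσ)
  calc cseq β σ k ≤ 1 * 1 :=
        mul_le_mul h1 h2 (Real.rpow_nonneg (Nat.cast_nonneg k) _) zero_le_one
    _ = 1 := one_mul 1

lemma cseq_anti {β σ : ℝ} (hβ : 0 ≤ β) (hσ : 0 ≤ σ) {j k : ℕ} (hj : 1 ≤ j) (hjk : j ≤ k) :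
    cseq β σ k ≤ cseq β σ j := by
  have hjpos : (0:ℝ) < (j:ℝ) := by exact_mod_cast hj
  have hcast : (j:ℝ) ≤ (k:ℝ) := by exact_mod_cast hjk
  have h1 : Real.exp (-(k:ℝ) * β) ≤ Real.exp (-(j:ℝ) * β) := by
    apply Real.exp_le_exp.mpr; nlinarith
  have h2 : (k:ℝ) ^ (-σ) ≤ (j:ℝ) ^ (-σ) :=
    Real.rpow_le_rpow_of_nonpos hjpos hcast (neg_nonpos.mpr hσ)
  exact mul_le_mul h1 h2 (Real.rpow_nonneg (by positivity) _) (Real.exp_pos _).le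

lemma psi_nonneg (β σ : ℝ) (u : ℝ) : 0 ≤ psi β σ u := by
  unfold psi; split
  · exact le_refl 0
  · exact cseq_nonneg _ _ _

lemma psi_le_one {β σ : ℝ} (hβ : 0 ≤ β) (hσ : 0 ≤ σ) (u : ℝ) : psi β σ u ≤ 1 := by
  unfold psi; split
  · exact zero_le_one
  · exact cseq_le_one hβ hσ (Nat.le_add_left 1 _)

lemma psi_of_nonneg {β σ : ℝ} {u : ℝ} (hu : 0 ≤ u) :
    psi β σ u = cseq β σ (⌊Real.log u⌋₊ + 1) := by
  unfold psi; rw [if_neg (not_lt.mpr hu)]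

lemma psi_anti {β σ : ℝ} (hβ : 0 ≤ β) (hσ : 0 ≤ σ) {u v : ℝ} (hu : 0 ≤ u) (huv : u ≤ v) :
    psi β σ v ≤ psi β σ u := by
  rw [psi_of_nonneg hu, psi_of_nonneg (hu.trans huv)]
  rcases eq_or_lt_of_le hu with h0 | h0
  · rw [← h0, Real.log_zero]
    simp only [Nat.floor_zero, zero_add]
    exact cseq_anti hβ hσ le_rfl (Nat.le_add_left 1 _)
  · exact cseq_anti hβ hσ (Nat.le_add_left 1 _)
      (Nat.add_le_add_right (Nat.floor_le_floor (Real.log_le_log h0 huv)) 1)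

/-- `psi u ≥ c_k` for `0 ≤ u < e^k`, `k ≥ 1`. -/
lemma cseq_le_psi {β σ : ℝ} (hβ : 0 ≤ β) (hσ : 0 ≤ σ) {u : ℝ} {k : ℕ} (hk : 1 ≤ k)
    (hu : 0 ≤ u) (huk : u < Real.exp k) : cseq β σ k ≤ psi β σ u := by
  rw [psi_of_nonneg hu]
  apply cseq_anti hβ hσ (Nat.le_add_left 1 _)
  have : ⌊Real.log u⌋₊ < k := by
    rcases eq_or_lt_of_le hu with h0 | h0
    · rw [← h0, Real.log_zero]; simp; omega
    · rcases lt_or_ge (Real.log u) 0 with hneg | hpos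
      · calc ⌊Real.log u⌋₊ = 0 := Nat.floor_eq_zero.mpr (hneg.trans zero_lt_one)
          _ < k := hk
      · rw [Nat.floor_lt hpos]
        exact (Real.log_lt_iff_lt_exp h0).mpr huk
  omega

/-- The key pointwise bound `u^β * psi u ≤ (⌊log u⌋₊ + 1)^{-σ}`. -/
lemma rpow_mul_psi_le {β σ : ℝ} (hβ : 0 ≤ β) {u : ℝ} (hu : 0 ≤ u) :
    u ^ β * psi β σ u ≤ ((⌊Real.log u⌋₊ + 1 : ℕ) : ℝ) ^ (-σ) := by
  set m : ℕ := ⌊Real.log u⌋₊ + 1 with hm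
  have hum : u < Real.exp m := by
    rcases eq_or_lt_of_le hu with h0 | h0
    · rw [← h0]; exact Real.exp_pos _
    · rw [← Real.exp_log h0]
      apply Real.exp_lt_exp.mpr
      have := Nat.lt_floor_add_one (Real.log u)
      push_cast [hm]
      push_cast at this
      linarith
  have h1 : u ^ β ≤ Real.exp ((m:ℝ) * β) := by
    have : u ^ β ≤ (Real.exp m) ^ β := Real.rpow_le_rpow hu hum.le hβ
    rwa [← Real.exp_log (Real.exp_pos (m:ℝ)), Real.log_exp, ← Real.exp_mul] at this
  rw [psi_of_nonneg hu, ← hm]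
  calc u ^ β * cseq β σ m
      ≤ Real.exp ((m:ℝ) * β) * cseq β σ m := by
        apply mul_le_mul_of_nonneg_right h1 (cseq_nonneg _ _ _)
    _ = (Real.exp ((m:ℝ) * β) * Real.exp (-(m:ℝ) * β)) * (m:ℝ) ^ (-σ) := by
        unfold cseq; ring
    _ = ((m:ℕ) : ℝ) ^ (-σ) := by
        rw [← Real.exp_add]; simp

lemma measurable_psi (β σ : ℝ) : Measurable (psi β σ) := by
  unfold psi
  exact Measurable.ite (measurableSet_lt measurable_id measurable_const) measurable_const
    ((measurable_from_nat (f := fun k => cseq β σ (k + 1))).comp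
      (Nat.measurable_floor.comp Real.measurable_log))

lemma volume_pi_set {n : ℕ} (i0 : Fin n) {S I : Set ℝ} (hS : MeasurableSet S)
    (hI : MeasurableSet I) :
    volume {x : EuclideanSpace ℝ (Fin n) | x i0 ∈ S ∧ ∀ i, i ≠ i0 → x i ∈ I}
      = volume S * volume I ^ (n - 1) := by
  have hmp := EuclideanSpace.volume_preserving_symm_measurableEquiv_toLp (Fin n)
  set B : Set (Fin n → ℝ) := Set.univ.pi (fun i => if i = i0 then S else I) with hBdef
  have hBm : MeasurableSet B := by
    apply MeasurableSet.univ_pi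
    intro i
    by_cases h : i = i0 <;> simp [h, hS, hI]
  have hset : {x : EuclideanSpace ℝ (Fin n) | x i0 ∈ S ∧ ∀ i, i ≠ i0 → x i ∈ I}
      = (MeasurableEquiv.toLp 2 (Fin n → ℝ)).symm ⁻¹' B := by
    ext x
    simp only [Set.mem_setOf_eq, Set.mem_preimage, hBdef, Set.mem_pi, Set.mem_univ,
      forall_true_left]
    constructor
    · rintro ⟨h1, h2⟩ i
      by_cases h : i = i0
      · subst h; simpa using h1
      · simpa [h] using h2 i h
    · intro h
      refine ⟨by simpa using h i0, fun i hi => by simpa [hi] using h i⟩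
  rw [hset, hmp.measure_preimage hBm.nullMeasurableSet, volume_pi_pi]
  rw [← Finset.mul_prod_erase Finset.univ _ (Finset.mem_univ i0)]
  simp only [if_pos rfl]
  congr 1
  rw [Finset.prod_congr rfl (fun i hi => by
    rw [if_neg (Finset.ne_of_mem_erase hi)]), Finset.prod_const,
    Finset.card_erase_of_mem (Finset.mem_univ i0), Finset.card_univ, Fintype.card_fin]

lemma integrableOn_inv_Ico {a b : ℝ} (ha : 0 < a) :
    IntegrableOn (fun t : ℝ => t⁻¹) (Ico a b) := by
  apply IntegrableOn.mono_set (t := Icc a b) ?_ Ico_subset_Icc_self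
  apply ContinuousOn.integrableOn_Icc
  exact continuousOn_id.inv₀ (fun x hx => ne_of_gt (lt_of_lt_of_le ha hx.1))

lemma lintegral_inv_Ico {a b : ℝ} (ha : 0 < a) (hab : a ≤ b) :
    ∫⁻ t in Ico a b, (ENNReal.ofReal t)⁻¹ = ENNReal.ofReal (Real.log b - Real.log a) := by
  have hb : 0 < b := ha.trans_le hab
  have hcong : ∀ t ∈ Ico a b, (ENNReal.ofReal t)⁻¹ = ENNReal.ofReal t⁻¹ := fun t ht =>
    (ENNReal.ofReal_inv_of_pos (ha.trans_le ht.1)).symm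
  rw [setLIntegral_congr_fun measurableSet_Ico hcong]
  rw [← MeasureTheory.ofReal_integral_eq_lintegral_ofReal (integrableOn_inv_Ico ha)]
  · congr 1
    rw [MeasureTheory.integral_Ico_eq_integral_Ioo,
      ← MeasureTheory.integral_Ioc_eq_integral_Ioo, ← intervalIntegral.integral_of_le hab,
      integral_inv (by
        intro h
        rcases h with ⟨h1, _⟩
        simp only [min_def] at h1
        split_ifs at h1 <;> linarith)]
    rw [Real.log_div hb.ne' ha.ne']
  · filter_upwards [ae_restrict_mem measurableSet_Ico] with t ht
    exact inv_nonneg.mpr (ha.trans_le ht.1).le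

end YoungAux
namespace YoungAux

/-- The real profile function on `ℝⁿ`. -/
noncomputable def FF (n : ℕ) (i0 : Fin n) (β σ : ℝ) (x : EuclideanSpace ℝ (Fin n)) : ℝ :=
  if ∀ i, i ≠ i0 → x i ∈ Icc (0:ℝ) 1 then psi β σ (x i0) else 0

/-- The test function `f`. -/
noncomputable def fF (n : ℕ) (i0 : Fin n) (β σ : ℝ) (x : EuclideanSpace ℝ (Fin n)) : ℂ :=
  ((FF n i0 β σ x : ℝ) : ℂ)

/-- The cube on which `g` is supported. -/
def Cset (n : ℕ) : Set (EuclideanSpace ℝ (Fin n)) := {y | ∀ i, y i ∈ Icc (-2⁻¹:ℝ) 0}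

/-- The test function `g`. -/
noncomputable def gF (n : ℕ) (y : EuclideanSpace ℝ (Fin n)) : ℂ :=
  (Cset n).indicator (fun _ => (1:ℂ)) y

variable {n : ℕ}

lemma FF_nonneg (i0 : Fin n) (β σ : ℝ) (x : EuclideanSpace ℝ (Fin n)) : 0 ≤ FF n i0 β σ x := by
  unfold FF; split
  · exact psi_nonneg β σ _
  · exact le_rfl

lemma FF_le_one (i0 : Fin n) {β σ : ℝ} (hβ : 0 ≤ β) (hσ : 0 ≤ σ)
    (x : EuclideanSpace ℝ (Fin n)) : FF n i0 β σ x ≤ 1 := by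
  unfold FF; split
  · exact psi_le_one hβ hσ _
  · exact zero_le_one

lemma measurableSet_cube (i0 : Fin n) (a b : ℝ) :
    MeasurableSet {x : EuclideanSpace ℝ (Fin n) | ∀ i, i ≠ i0 → x i ∈ Icc a b} := by
  have h : {x : EuclideanSpace ℝ (Fin n) | ∀ i, i ≠ i0 → x i ∈ Icc a b}
      = ⋂ i, {x : EuclideanSpace ℝ (Fin n) | i ≠ i0 → x i ∈ Icc a b} := by
    ext x; simp [Set.mem_iInter]
  rw [h]
  refine MeasurableSet.iInter fun i => ?_
  by_cases hi : i = i0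
  · have : {x : EuclideanSpace ℝ (Fin n) | i ≠ i0 → x i ∈ Icc a b} = univ := by
      ext x; simp [hi]
    rw [this]; exact MeasurableSet.univ
  · have : {x : EuclideanSpace ℝ (Fin n) | i ≠ i0 → x i ∈ Icc a b}
        = (fun x : EuclideanSpace ℝ (Fin n) => x i) ⁻¹' Icc a b := by
      ext x; simp [hi]
    rw [this]; exact ((measurable_pi_apply i).comp (WithLp.measurable_ofLp 2 _)) measurableSet_Icc

lemma measurable_FF (i0 : Fin n) (β σ : ℝ) : Measurable (FF n i0 β σ) := by
  unfold FF
  exact Measurable.ite (measurableSet_cube i0 0 1)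
    ((measurable_psi β σ).comp ((measurable_pi_apply i0).comp (WithLp.measurable_ofLp 2 _))) measurable_const

lemma measurable_fF (i0 : Fin n) (β σ : ℝ) : Measurable (fF n i0 β σ) :=
  Complex.measurable_ofReal.comp (measurable_FF i0 β σ)

lemma nnnorm_fF (i0 : Fin n) (β σ : ℝ) (x : EuclideanSpace ℝ (Fin n)) :
    ((‖fF n i0 β σ x‖₊ : ℝ≥0∞)) = ENNReal.ofReal (FF n i0 β σ x) := by
  rw [← enorm_eq_nnnorm, ← ofReal_norm]
  unfold fF
  rw [Complex.norm_real, Real.norm_eq_abs, abs_of_nonneg (FF_nonneg i0 β σ x)]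

lemma measurableSet_Cset : MeasurableSet (Cset n) := by
  have h : Cset n = ⋂ i, (fun x : EuclideanSpace ℝ (Fin n) => x i) ⁻¹' Icc (-2⁻¹:ℝ) 0 := by
    ext x; simp [Cset, Set.mem_iInter]
  rw [h]
  exact MeasurableSet.iInter fun i => ((measurable_pi_apply i).comp (WithLp.measurable_ofLp 2 _)) measurableSet_Icc

lemma volume_Cset (hn : 0 < n) : volume (Cset n) = ENNReal.ofReal 2⁻¹ ^ n := by
  set i0 : Fin n := ⟨0, hn⟩
  have h : Cset n = {x : EuclideanSpace ℝ (Fin n) |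
      x i0 ∈ Icc (-2⁻¹:ℝ) 0 ∧ ∀ i, i ≠ i0 → x i ∈ Icc (-2⁻¹:ℝ) 0} := by
    ext x
    constructor
    · intro h; exact ⟨h i0, fun i _ => h i⟩
    · rintro ⟨h1, h2⟩ i
      by_cases hi : i = i0
      · rw [hi]; exact h1
      · exact h2 i hi
  rw [h, volume_pi_set i0 measurableSet_Icc measurableSet_Icc, Real.volume_Icc]
  rw [show (0:ℝ) - (-2⁻¹) = 2⁻¹ by norm_num]
  rw [← pow_succ']
  congr 1
  omega

lemma memLp_gF (hn : 0 < n) : MemLp (gF n) 1 (volume : Measure (EuclideanSpace ℝ (Fin n))) := by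
  rw [memLp_one_iff_integrable]
  have : Integrable ((Cset n).indicator (fun _ => (1:ℂ))) volume := by
    rw [integrable_indicator_iff measurableSet_Cset]
    refine integrableOn_const ?_
    rw [volume_Cset hn]
    exact (ENNReal.pow_lt_top ENNReal.ofReal_lt_top).ne
  exact this

/-- Distribution-function upper bound for `f`. -/
lemma distFn_fF_le (i0 : Fin n) {β σ : ℝ} (hβ : 0 ≤ β) (hσ : 0 ≤ σ) {t : ℝ} (ht : 0 ≤ t) :
    distFn volume (fun x => ((‖fF n i0 β σ x‖₊ : ℝ≥0∞)))
      (ENNReal.ofReal (psi β σ t)) ≤ ENNReal.ofReal t := by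
  have hsub : {x : EuclideanSpace ℝ (Fin n) |
        ENNReal.ofReal (psi β σ t) < ((‖fF n i0 β σ x‖₊ : ℝ≥0∞))}
      ⊆ {x : EuclideanSpace ℝ (Fin n) | x i0 ∈ Ico (0:ℝ) t ∧ ∀ i, i ≠ i0 → x i ∈ Icc (0:ℝ) 1} := by
    intro x hx
    rw [Set.mem_setOf_eq, nnnorm_fF] at hx
    have hFx : psi β σ t < FF n i0 β σ x := by
      by_contra hle; push_neg at hle
      exact absurd hx (not_lt.mpr (ENNReal.ofReal_le_ofReal hle))
    have hxB : ∀ i, i ≠ i0 → x i ∈ Icc (0:ℝ) 1 := by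
      by_contra hB
      have h0 : FF n i0 β σ x = 0 := by unfold FF; rw [if_neg hB]
      rw [h0] at hFx
      exact absurd hFx (not_lt.mpr (psi_nonneg β σ t))
    have hFeq : FF n i0 β σ x = psi β σ (x i0) := by unfold FF; rw [if_pos hxB]
    rw [hFeq] at hFx
    have hx0 : 0 ≤ x i0 := by
      by_contra hneg; push_neg at hneg
      have h0 : psi β σ (x i0) = 0 := by unfold psi; rw [if_pos hneg]
      rw [h0] at hFx
      exact absurd hFx (not_lt.mpr (psi_nonneg β σ t))
    refine ⟨⟨hx0, ?_⟩, hxB⟩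
    by_contra hge; push_neg at hge
    exact absurd hFx (not_lt.mpr (psi_anti hβ hσ ht hge))
  calc distFn volume (fun x => ((‖fF n i0 β σ x‖₊ : ℝ≥0∞))) (ENNReal.ofReal (psi β σ t))
      ≤ volume {x : EuclideanSpace ℝ (Fin n) |
          x i0 ∈ Ico (0:ℝ) t ∧ ∀ i, i ≠ i0 → x i ∈ Icc (0:ℝ) 1} := measure_mono hsub
    _ = volume (Ico (0:ℝ) t) * volume (Icc (0:ℝ) 1) ^ (n-1) :=
        volume_pi_set i0 measurableSet_Ico measurableSet_Icc
    _ = ENNReal.ofReal t := by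
        rw [Real.volume_Ico, Real.volume_Icc]
        simp

/-- Rearrangement upper bound for `f`. -/
lemma rearr_fF_le (i0 : Fin n) {β σ : ℝ} (hβ : 0 ≤ β) (hσ : 0 ≤ σ) {t : ℝ} (ht : 0 ≤ t) :
    rearr volume (fun x => ((‖fF n i0 β σ x‖₊ : ℝ≥0∞))) (ENNReal.ofReal t)
      ≤ ENNReal.ofReal (psi β σ t) :=
  rearr_le_of_distFn_le (distFn_fF_le i0 hβ hσ ht)

end YoungAux
namespace YoungAux

variable {n : ℕ}

set_option maxHeartbeats 1000000 in
lemma lorentz_fF_ne_top (i0 : Fin n) {q l : ℝ≥0∞} (hq1 : 1 < q) (hq2 : q < ⊤)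
    {σ : ℝ} (hσ : 0 < σ) (hl : l ≠ ⊤ → 1 < σ * l.toReal) :
    eLorentzNorm volume (fF n i0 (q⁻¹).toReal σ) q l ≠ ⊤ := by
  have hq0 : q ≠ 0 := (lt_trans zero_lt_one hq1).ne'
  have hqt : q ≠ ⊤ := hq2.ne
  set β : ℝ := (q⁻¹).toReal with hβdef
  have hβpos : 0 < β :=
    ENNReal.toReal_pos (ENNReal.inv_ne_zero.mpr hqt) (ENNReal.inv_ne_top.mpr hq0)
  set φ : EuclideanSpace ℝ (Fin n) → ℝ≥0∞ := fun x => ((‖fF n i0 β σ x‖₊ : ℝ≥0∞)) with hφdef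
  unfold eLorentzNorm lorentzNorm
  by_cases hltop : l = ⊤
  · rw [if_pos hltop]
    have hbd : ∀ t : ℝ≥0∞, t ^ (q⁻¹).toReal * rearr volume φ t ≤ 1 := by
      intro t
      rcases eq_or_ne t ⊤ with rfl | htop
      · rw [rearr_top, mul_zero]; exact zero_le_one
      · have hu : (0:ℝ) ≤ t.toReal := ENNReal.toReal_nonneg
        have ht : t = ENNReal.ofReal t.toReal := (ENNReal.ofReal_toReal htop).symm
        rw [ht, ← hβdef]
        calc ENNReal.ofReal t.toReal ^ β * rearr volume φ (ENNReal.ofReal t.toReal)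
            ≤ ENNReal.ofReal t.toReal ^ β * ENNReal.ofReal (psi β σ t.toReal) :=
              mul_le_mul_right (rearr_fF_le i0 hβpos.le hσ.le hu) _
          _ = ENNReal.ofReal (t.toReal ^ β * psi β σ t.toReal) := by
              rw [ENNReal.ofReal_rpow_of_nonneg hu hβpos.le,
                ← ENNReal.ofReal_mul (Real.rpow_nonneg hu β)]
          _ ≤ ENNReal.ofReal 1 := by
              apply ENNReal.ofReal_le_ofReal
              refine le_trans (rpow_mul_psi_le hβpos.le hu) ?_
              exact Real.rpow_le_one_of_one_le_of_nonpos
                (by exact_mod_cast Nat.le_add_left 1 _) (neg_nonpos.mpr hσ.le)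
          _ = 1 := ENNReal.ofReal_one
    exact (lt_of_le_of_lt (iSup_le hbd) ENNReal.one_lt_top).ne
  · rw [if_neg hltop]
    set L : ℝ := l.toReal with hLdef
    have hσL : 1 < σ * L := hl hltop
    have hLpos : 0 < L := by nlinarith [hσ]
    apply ne_of_lt (ENNReal.rpow_lt_top_of_nonneg ENNReal.toReal_nonneg ?_)
    set G : ℝ → ℝ≥0∞ :=
      fun t => (ENNReal.ofReal t ^ (q⁻¹).toReal * rearr volume φ (ENNReal.ofReal t)) ^ L
        / ENNReal.ofReal t with hGdef
    set J : ℕ → Set ℝ :=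
      fun k => if k = 0 then Ioo 0 1 else Ico (Real.exp (k-1:ℕ)) (Real.exp (k:ℕ)) with hJdef
    have hcov : Ioi (0:ℝ) ⊆ ⋃ k, J k := by
      intro t ht
      rcases lt_or_ge t 1 with h1 | h1
      · exact Set.mem_iUnion.mpr ⟨0, by simp only [hJdef, if_pos rfl]; exact ⟨ht, h1⟩⟩
      · refine Set.mem_iUnion.mpr ⟨⌊Real.log t⌋₊ + 1, ?_⟩
        have htpos : (0:ℝ) < t := lt_of_lt_of_le zero_lt_one h1
        simp only [hJdef, if_neg (Nat.succ_ne_zero _), Nat.add_sub_cancel]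
        constructor
        · calc Real.exp (⌊Real.log t⌋₊:ℝ) ≤ Real.exp (Real.log t) :=
              Real.exp_le_exp.mpr (Nat.floor_le (Real.log_nonneg h1))
            _ = t := Real.exp_log htpos
        · have hfl := Nat.lt_floor_add_one (Real.log t)
          calc t = Real.exp (Real.log t) := (Real.exp_log htpos).symm
            _ < Real.exp ((⌊Real.log t⌋₊ + 1 : ℕ):ℝ) := by
                apply Real.exp_lt_exp.mpr; push_cast; push_cast at hfl; linarith
    have hmain : ∫⁻ t in Ioi (0:ℝ), G t ≤ ∑' k, ∫⁻ t in J k, G t :=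
      le_trans (lintegral_mono_set hcov) (lintegral_iUnion_le _ _)
    refine ne_of_lt (lt_of_le_of_lt hmain ?_)
    rw [tsum_eq_zero_add' ENNReal.summable]
    refine ENNReal.add_lt_top.mpr ⟨?_, ?_⟩
    · -- the piece over (0,1)
      have hGle : ∀ t ∈ Ioo (0:ℝ) 1, G t ≤ ENNReal.ofReal (t ^ (β*L - 1)) := by
        intro t ht
        have ht0 : 0 < t := ht.1
        have h1 : rearr volume φ (ENNReal.ofReal t) ≤ ENNReal.ofReal (psi β σ t) :=
          rearr_fF_le i0 hβpos.le hσ.le ht0.le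
        have h2 : ENNReal.ofReal (psi β σ t) ≤ 1 := by
          rw [← ENNReal.ofReal_one]
          exact ENNReal.ofReal_le_ofReal (psi_le_one hβpos.le hσ.le t)
        calc G t ≤ (ENNReal.ofReal t ^ β * 1) ^ L / ENNReal.ofReal t := by
              rw [hGdef, ← hβdef]
              exact ENNReal.div_le_div
                (ENNReal.rpow_le_rpow (mul_le_mul_right (h1.trans h2) _) hLpos.le) le_rfl
          _ = ENNReal.ofReal (t ^ (β*L - 1)) := by
              rw [mul_one, ENNReal.ofReal_rpow_of_nonneg ht0.le hβpos.le,
                ENNReal.ofReal_rpow_of_nonneg (Real.rpow_nonneg ht0.le β) hLpos.le,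
                ← ENNReal.ofReal_div_of_pos ht0]
              congr 1
              rw [Real.rpow_sub ht0, Real.rpow_one, ← Real.rpow_mul ht0.le]
        -- done
      have hJ0 : J 0 = Ioo (0:ℝ) 1 := by simp [hJdef]
      rw [hJ0]
      calc ∫⁻ t in Ioo (0:ℝ) 1, G t ≤ ∫⁻ t in Ioo (0:ℝ) 1, ENNReal.ofReal (t ^ (β*L-1)) :=
            setLIntegral_mono' measurableSet_Ioo hGle
        _ < ⊤ := by
            have hint : IntegrableOn (fun t : ℝ => t ^ (β*L-1)) (Ioo 0 1) :=
              (intervalIntegral.integrableOn_Ioo_rpow_iff one_pos).mpr (by nlinarith)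
            have heq := MeasureTheory.ofReal_integral_eq_lintegral_ofReal hint
              (by
                filter_upwards [ae_restrict_mem measurableSet_Ioo] with t ht
                exact Real.rpow_nonneg ht.1.le _)
            rw [← heq]
            exact ENNReal.ofReal_lt_top
    · -- the sum over the dyadic-type blocks
      have hbound : ∀ k : ℕ,
          ∫⁻ t in J (k+1), G t ≤ ENNReal.ofReal (((k+1:ℕ):ℝ) ^ (-(σ*L))) := by
        intro k
        have hJk : J (k+1) = Ico (Real.exp (k:ℕ)) (Real.exp ((k+1:ℕ):ℝ)) := by
          simp [hJdef]
        have hGle : ∀ t ∈ Ico (Real.exp (k:ℕ)) (Real.exp ((k+1:ℕ):ℝ)),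
            G t ≤ ENNReal.ofReal (((k+1:ℕ):ℝ) ^ (-(σ*L))) * (ENNReal.ofReal t)⁻¹ := by
          intro t ht
          have ht0 : 0 < t := lt_of_lt_of_le (Real.exp_pos _) ht.1
          have hfloor : ⌊Real.log t⌋₊ = k := by
            have hlog1 : (k:ℝ) ≤ Real.log t := by
              rw [← Real.log_exp (k:ℝ)]
              exact Real.log_le_log (Real.exp_pos _) ht.1
            have hlog2 : Real.log t < (k:ℝ) + 1 := by
              rw [← Real.log_exp ((k:ℝ)+1)]
              apply Real.log_lt_log ht0
              convert ht.2 using 2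
              exacts [rfl, by push_cast; ring]
            rw [Nat.floor_eq_iff (le_trans (Nat.cast_nonneg k) hlog1)]
            exact ⟨hlog1, hlog2⟩
          have h1 : rearr volume φ (ENNReal.ofReal t) ≤ ENNReal.ofReal (psi β σ t) :=
            rearr_fF_le i0 hβpos.le hσ.le ht0.le
          have hkey : t ^ β * psi β σ t ≤ ((k+1:ℕ):ℝ) ^ (-σ) := by
            have := rpow_mul_psi_le (σ := σ) hβpos.le ht0.le
            rwa [hfloor] at this
          calc G t ≤ (ENNReal.ofReal (t ^ β * psi β σ t)) ^ L / ENNReal.ofReal t := by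
                rw [hGdef, ← hβdef]
                apply ENNReal.div_le_div ?_ le_rfl
                apply ENNReal.rpow_le_rpow ?_ hLpos.le
                rw [ENNReal.ofReal_mul (Real.rpow_nonneg ht0.le β),
                  ← ENNReal.ofReal_rpow_of_nonneg ht0.le hβpos.le]
                exact mul_le_mul_right h1 _
            _ ≤ (ENNReal.ofReal (((k+1:ℕ):ℝ) ^ (-σ))) ^ L / ENNReal.ofReal t :=
                ENNReal.div_le_div
                  (ENNReal.rpow_le_rpow (ENNReal.ofReal_le_ofReal hkey) hLpos.le) le_rfl
            _ = ENNReal.ofReal (((k+1:ℕ):ℝ) ^ (-(σ*L))) * (ENNReal.ofReal t)⁻¹ := by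
                rw [ENNReal.ofReal_rpow_of_nonneg (Real.rpow_nonneg (Nat.cast_nonneg _) _)
                  hLpos.le, ← Real.rpow_mul (Nat.cast_nonneg _), div_eq_mul_inv]
                norm_num
        rw [hJk]
        calc ∫⁻ t in Ico (Real.exp (k:ℕ)) (Real.exp ((k+1:ℕ):ℝ)), G t
            ≤ ∫⁻ t in Ico (Real.exp (k:ℕ)) (Real.exp ((k+1:ℕ):ℝ)),
              ENNReal.ofReal (((k+1:ℕ):ℝ) ^ (-(σ*L))) * (ENNReal.ofReal t)⁻¹ :=
              setLIntegral_mono' measurableSet_Ico hGle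
          _ = ENNReal.ofReal (((k+1:ℕ):ℝ) ^ (-(σ*L)))
              * ∫⁻ t in Ico (Real.exp (k:ℕ)) (Real.exp ((k+1:ℕ):ℝ)), (ENNReal.ofReal t)⁻¹ :=
              lintegral_const_mul' _ _ ENNReal.ofReal_ne_top
          _ = ENNReal.ofReal (((k+1:ℕ):ℝ) ^ (-(σ*L))) * ENNReal.ofReal 1 := by
              rw [lintegral_inv_Ico (Real.exp_pos _)
                (Real.exp_le_exp.mpr (by push_cast; linarith)),
                Real.log_exp, Real.log_exp]
              norm_num
          _ = ENNReal.ofReal (((k+1:ℕ):ℝ) ^ (-(σ*L))) := by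
              rw [ENNReal.ofReal_one, mul_one]
      have hsum : Summable (fun k : ℕ => ((k+1:ℕ):ℝ) ^ (-(σ*L))) := by
        have h1 : Summable (fun k : ℕ => ((k:ℝ) ^ (σ*L))⁻¹) :=
          Real.summable_nat_rpow_inv.mpr hσL
        have h2 : Summable (fun k : ℕ => (((k+1:ℕ):ℝ) ^ (σ*L))⁻¹) := by
          exact_mod_cast (summable_nat_add_iff 1).mpr h1
        apply h2.congr
        intro k
        rw [← Real.rpow_neg (Nat.cast_nonneg _)]
      calc (∑' k, ∫⁻ t in J (k+1), G t)
          ≤ ∑' k, ENNReal.ofReal (((k+1:ℕ):ℝ) ^ (-(σ*L))) := ENNReal.tsum_le_tsum hbound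
        _ < ⊤ := by
            rw [← ENNReal.ofReal_tsum_of_nonneg
              (fun k => Real.rpow_nonneg (Nat.cast_nonneg _) _) hsum]
            exact ENNReal.ofReal_lt_top

end YoungAux
namespace YoungAux

variable {n : ℕ}

/-- Pointwise lower bound for the convolution on a strip. -/
lemma conv_lower (hn : 0 < n) (i0 : Fin n) {β σ : ℝ} (hβ : 0 ≤ β) (hσ : 0 ≤ σ)
    (x : EuclideanSpace ℝ (Fin n)) (hx0 : 0 ≤ x i0)
    (hxi : ∀ i, i ≠ i0 → x i ∈ Icc (0:ℝ) 2⁻¹) :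
    ENNReal.ofReal ((2⁻¹:ℝ)^n * psi β σ (x i0 + 2⁻¹))
      ≤ ((‖convFn (fF n i0 β σ) (gF n) x‖₊ : ℝ≥0∞)) := by
  have hCvol_ne : volume (Cset n) ≠ ⊤ := by
    rw [volume_Cset hn]; exact (ENNReal.pow_lt_top ENNReal.ofReal_lt_top).ne
  have h1 : convFn (fF n i0 β σ) (gF n) x = ∫ y in Cset n, fF n i0 β σ (x - y) := by
    unfold convFn
    calc ∫ y, fF n i0 β σ (x - y) * gF n y
        = ∫ y, (Cset n).indicator (fun y => fF n i0 β σ (x - y)) y := by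
          congr 1; funext y
          unfold gF
          by_cases hy : y ∈ Cset n
          · rw [Set.indicator_of_mem hy, Set.indicator_of_mem hy, mul_one]
          · rw [Set.indicator_of_notMem hy, Set.indicator_of_notMem hy, mul_zero]
      _ = ∫ y in Cset n, fF n i0 β σ (x - y) := integral_indicator measurableSet_Cset
  have h2 : ∫ y in Cset n, fF n i0 β σ (x - y)
      = ((∫ y in Cset n, FF n i0 β σ (x - y) : ℝ) : ℂ) := by
    unfold fF; exact integral_ofReal
  have hmeas : AEStronglyMeasurable (fun y : EuclideanSpace ℝ (Fin n) => FF n i0 β σ (x - y))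
      volume := by
    exact ((measurable_FF i0 β σ).comp (measurable_const.sub measurable_id)).aestronglyMeasurable
  have hIOn : IntegrableOn (fun y => FF n i0 β σ (x - y)) (Cset n) volume := by
    apply Measure.integrableOn_of_bounded hCvol_ne hmeas (M := 1)
    filter_upwards with y
    rw [Real.norm_eq_abs, abs_of_nonneg (FF_nonneg i0 β σ _)]
    exact FF_le_one i0 hβ hσ _
  have hlow : ∀ y ∈ Cset n, psi β σ (x i0 + 2⁻¹) ≤ FF n i0 β σ (x - y) := by
    intro y hy
    have hB : ∀ i, i ≠ i0 → (x - y) i ∈ Icc (0:ℝ) 1 := by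
      intro i hi
      have hxI := hxi i hi
      have hyI := hy i
      have hsub : (x - y) i = x i - y i := rfl
      rw [hsub]
      constructor
      · linarith [hxI.1, hyI.2]
      · linarith [hxI.2, hyI.1]
    unfold FF
    rw [if_pos hB]
    have hsub : (x - y) i0 = x i0 - y i0 := rfl
    rw [hsub]
    exact psi_anti hβ hσ (by linarith [(hy i0).2]) (by linarith [(hy i0).1])
  have hint : (2⁻¹:ℝ)^n * psi β σ (x i0 + 2⁻¹) ≤ ∫ y in Cset n, FF n i0 β σ (x - y) := by
    have hconst : ∫ _ in Cset n, psi β σ (x i0 + 2⁻¹) ∂volume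
        = (2⁻¹:ℝ)^n * psi β σ (x i0 + 2⁻¹) := by
      rw [setIntegral_const, smul_eq_mul]
      congr 1
      rw [measureReal_def, volume_Cset hn, ← ENNReal.ofReal_pow (by norm_num), ENNReal.toReal_ofReal
        (by positivity)]
    rw [← hconst]
    exact setIntegral_mono_on
      (integrableOn_const hCvol_ne)
      hIOn measurableSet_Cset hlow
  rw [← enorm_eq_nnnorm, ← ofReal_norm, h1, h2, Complex.norm_real, Real.norm_eq_abs]
  exact ENNReal.ofReal_le_ofReal (le_trans hint (le_abs_self _))

end YoungAux
namespace YoungAux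

variable {n : ℕ}

set_option maxHeartbeats 2000000 in
lemma lorentz_conv_top (hn : 0 < n) (i0 : Fin n) {q s : ℝ≥0∞} (hq1 : 1 < q) (hq2 : q < ⊤)
    (hs : 0 < s) (hst : s ≠ ⊤) :
    eLorentzNorm volume (convFn (fF n i0 (q⁻¹).toReal (s.toReal)⁻¹) (gF n)) q s = ⊤ := by
  have hq0 : q ≠ 0 := (lt_trans zero_lt_one hq1).ne'
  have hqt : q ≠ ⊤ := hq2.ne
  set β : ℝ := (q⁻¹).toReal with hβdef
  have hβpos : 0 < β :=
    ENNReal.toReal_pos (ENNReal.inv_ne_zero.mpr hqt) (ENNReal.inv_ne_top.mpr hq0)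
  set r : ℝ := s.toReal with hrdef
  have hrpos : 0 < r := ENNReal.toReal_pos hs.ne' hst
  set σ : ℝ := r⁻¹ with hσdef
  have hσpos : 0 < σ := inv_pos.mpr hrpos
  unfold eLorentzNorm lorentzNorm
  rw [if_neg hst]
  set φ : EuclideanSpace ℝ (Fin n) → ℝ≥0∞ :=
    fun x => ((‖convFn (fF n i0 β σ) (gF n) x‖₊ : ℝ≥0∞)) with hφdef
  set w : ℝ := (2⁻¹:ℝ)^n with hwdef
  set v : ℝ := (2⁻¹:ℝ)^(n-1) with hvdef
  have hwpos : 0 < w := by rw [hwdef]; positivity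
  have hvpos : 0 < v := by rw [hvdef]; positivity
  set A : ℕ → ℝ := fun k => (Real.exp k - 2⁻¹) * v with hAdef
  have hexp1 : ∀ k : ℕ, (1:ℝ) ≤ Real.exp k := fun k => by
    rw [← Real.exp_zero]; exact Real.exp_le_exp.mpr (Nat.cast_nonneg k)
  have hApos : ∀ k, 0 < A k := fun k => by
    have := hexp1 k; simp only [hAdef]; nlinarith
  have hA2 : ∀ k, 2 * A k ≤ A (k+1) := by
    intro k
    have h1 := hexp1 k
    have h2 : (2:ℝ) ≤ Real.exp 1 := by
      have := Real.add_one_le_exp 1; linarith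
    have h3 : Real.exp ((k+1:ℕ):ℝ) = Real.exp 1 * Real.exp (k:ℕ) := by
      rw [← Real.exp_add]; push_cast; ring_nf
    simp only [hAdef, h3]
    have h4 : 2 * (Real.exp ((k:ℕ):ℝ) - 2⁻¹) ≤ Real.exp 1 * Real.exp ((k:ℕ):ℝ) - 2⁻¹ := by
      nlinarith [Real.exp_pos ((k:ℕ):ℝ)]
    calc 2 * ((Real.exp ((k:ℕ):ℝ) - 2⁻¹) * v) = (2 * (Real.exp ((k:ℕ):ℝ) - 2⁻¹)) * v := by ring
      _ ≤ (Real.exp 1 * Real.exp ((k:ℕ):ℝ) - 2⁻¹) * v := mul_le_mul_of_nonneg_right h4 hvpos.le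
  have hAmono : Monotone A := monotone_nat_of_le_succ fun k => by
    have := hA2 k; have := hApos k; linarith
  -- distribution function lower bound
  have hdist : ∀ k : ℕ, 1 ≤ k → ∀ τ : ℝ≥0∞, τ < ENNReal.ofReal (w * cseq β σ k) →
      ENNReal.ofReal (A k) ≤ distFn volume φ τ := by
    intro k hk τ hτ
    have hsub : {x : EuclideanSpace ℝ (Fin n) |
          x i0 ∈ Ico (0:ℝ) (Real.exp k - 2⁻¹) ∧ ∀ i, i ≠ i0 → x i ∈ Icc (0:ℝ) 2⁻¹}
        ⊆ {x | τ < φ x} := by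
      intro x hx
      rcases hx with ⟨hx0, hxi⟩
      have hc := conv_lower hn i0 hβpos.le hσpos.le x hx0.1 hxi
      have hψ : cseq β σ k ≤ psi β σ (x i0 + 2⁻¹) := by
        apply cseq_le_psi hβpos.le hσpos.le hk (by linarith [hx0.1])
        have := hx0.2; linarith
      have : ENNReal.ofReal (w * cseq β σ k) ≤ φ x := by
        refine le_trans ?_ hc
        apply ENNReal.ofReal_le_ofReal
        rw [hwdef]
        exact mul_le_mul_of_nonneg_left hψ (by positivity)
      exact lt_of_lt_of_le hτ this
    calc ENNReal.ofReal (A k)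
        = volume {x : EuclideanSpace ℝ (Fin n) |
            x i0 ∈ Ico (0:ℝ) (Real.exp k - 2⁻¹) ∧ ∀ i, i ≠ i0 → x i ∈ Icc (0:ℝ) 2⁻¹} := by
          rw [volume_pi_set i0 measurableSet_Ico measurableSet_Icc, Real.volume_Ico,
            Real.volume_Icc]
          simp only [hAdef]
          rw [ENNReal.ofReal_mul (by have := hexp1 k; linarith)]
          congr 1
          · congr 1; ring
          · rw [hvdef, ← ENNReal.ofReal_pow (by norm_num)]
            congr 1
            congr 1
            norm_num
      _ ≤ distFn volume φ τ := measure_mono hsub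
  -- rearrangement lower bound
  have hrearr : ∀ k : ℕ, 1 ≤ k → ∀ t : ℝ, t < A k →
      ENNReal.ofReal (w * cseq β σ k) ≤ rearr volume φ (ENNReal.ofReal t) := by
    intro k hk t ht
    apply le_rearr_of_distFn
    intro b hb
    by_contra hlt
    push_neg at hlt
    have h1 := hdist k hk b hlt
    have h2 : ENNReal.ofReal t < ENNReal.ofReal (A k) :=
      (ENNReal.ofReal_lt_ofReal_iff (hApos k)).mpr ht
    exact absurd (le_trans h1 hb) (not_le.mpr h2)
  -- reduce to showing the integral is infinite
  suffices htop : (∫⁻ t in Ioi (0:ℝ),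
      (ENNReal.ofReal t ^ β * rearr volume φ (ENNReal.ofReal t)) ^ r / ENNReal.ofReal t) = ⊤ by
    rw [htop]
    apply ENNReal.top_rpow_of_pos
    rw [ENNReal.toReal_inv, ← hrdef]
    positivity
  set I : ℕ → Set ℝ := fun k => Ioo (A (k+1) / 2) (A (k+1)) with hIdef
  have hIsub : (⋃ k, I k) ⊆ Ioi (0:ℝ) := by
    intro t ht
    rcases Set.mem_iUnion.mp ht with ⟨k, hk⟩
    have h1 := hApos (k+1)
    have h2 := hk.1
    simp only [Set.mem_Ioi]
    linarith
  have hdisj : Pairwise (Function.onFun Disjoint I) := by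
    have key : ∀ j k : ℕ, j < k → Disjoint (I j) (I k) := by
      intro j k hjk
      apply Set.Ioo_disjoint_Ioo.mpr
      have h1 : A (j+1) ≤ A k := hAmono (by omega)
      have h2 : 2 * A k ≤ A (k+1) := hA2 k
      have h3 : A (j+1) ≤ A (k+1) / 2 := by linarith
      calc A (j+1) ⊓ A (k+1) ≤ A (j+1) := inf_le_left
        _ ≤ A (k+1) / 2 := h3
        _ ≤ A (j+1) / 2 ⊔ A (k+1) / 2 := le_sup_right
    intro j k hjk
    rcases lt_or_gt_of_ne hjk with h | h
    · exact key j k h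
    · exact (key k j h).symm
  set K : ℝ := (v/4) ^ (β*r) * w ^ r / 2 with hKdef
  have hKpos : 0 < K := by
    rw [hKdef]
    have h1 : (0:ℝ) < (v/4) ^ (β*r) := Real.rpow_pos_of_pos (by positivity) _
    have h2 : (0:ℝ) < w ^ r := Real.rpow_pos_of_pos hwpos _
    positivity
  have hterm : ∀ k : ℕ, ENNReal.ofReal (K * ((k+1:ℕ):ℝ)⁻¹)
      ≤ ∫⁻ t in I k, (ENNReal.ofReal t ^ β * rearr volume φ (ENNReal.ofReal t)) ^ r
          / ENNReal.ofReal t := by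
    intro k
    have hapos : 0 < A (k+1) := hApos (k+1)
    have hcpos : 0 < w * cseq β σ (k+1) := mul_pos hwpos (cseq_pos β σ (Nat.le_add_left 1 k))
    have hpt : ∀ t ∈ I k,
        (ENNReal.ofReal (A (k+1)/2) ^ β * ENNReal.ofReal (w * cseq β σ (k+1))) ^ r
            / ENNReal.ofReal (A (k+1))
          ≤ (ENNReal.ofReal t ^ β * rearr volume φ (ENNReal.ofReal t)) ^ r
            / ENNReal.ofReal t := by
      intro t ht
      apply ENNReal.div_le_div
      · apply ENNReal.rpow_le_rpow ?_ hrpos.le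
        exact mul_le_mul' (ENNReal.rpow_le_rpow (ENNReal.ofReal_le_ofReal ht.1.le) hβpos.le)
          (hrearr (k+1) (Nat.le_add_left 1 k) t ht.2)
      · exact ENNReal.ofReal_le_ofReal ht.2.le
    have hIvol : ∫⁻ _ in I k,
        ((ENNReal.ofReal (A (k+1)/2) ^ β * ENNReal.ofReal (w * cseq β σ (k+1))) ^ r
          / ENNReal.ofReal (A (k+1)))
        = ((ENNReal.ofReal (A (k+1)/2) ^ β * ENNReal.ofReal (w * cseq β σ (k+1))) ^ r
          / ENNReal.ofReal (A (k+1))) * ENNReal.ofReal (A (k+1)/2) := by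
      rw [setLIntegral_const]
      simp only [hIdef]
      rw [Real.volume_Ioo]
      congr 1
      ring
    have hmain : ENNReal.ofReal (K * ((k+1:ℕ):ℝ)⁻¹)
        ≤ (ENNReal.ofReal (A (k+1)/2) ^ β * ENNReal.ofReal (w * cseq β σ (k+1))) ^ r
          / ENNReal.ofReal (A (k+1)) * ENNReal.ofReal (A (k+1)/2) := by
      have heq : (ENNReal.ofReal (A (k+1)/2) ^ β * ENNReal.ofReal (w * cseq β σ (k+1))) ^ r
          / ENNReal.ofReal (A (k+1)) * ENNReal.ofReal (A (k+1)/2)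
          = ENNReal.ofReal (((A (k+1)/2) ^ β * (w * cseq β σ (k+1))) ^ r
              / A (k+1) * (A (k+1)/2)) := by
        rw [ENNReal.ofReal_rpow_of_nonneg (by positivity) hβpos.le,
          ← ENNReal.ofReal_mul (Real.rpow_nonneg (by positivity) _),
          ENNReal.ofReal_rpow_of_nonneg (by positivity) hrpos.le,
          ← ENNReal.ofReal_div_of_pos hapos,
          ← ENNReal.ofReal_mul (by positivity)]
      rw [heq]
      apply ENNReal.ofReal_le_ofReal
      -- the real inequality
      have hsimp : ((A (k+1)/2) ^ β * (w * cseq β σ (k+1))) ^ r / A (k+1) * (A (k+1)/2)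
          = ((A (k+1)/2) ^ β * (w * cseq β σ (k+1))) ^ r / 2 := by
        field_simp
      rw [hsimp]
      -- key estimate
      have hexpc : Real.exp (((k+1:ℕ):ℝ)*β) * Real.exp (-((k+1:ℕ):ℝ)*β) = 1 := by
        rw [← Real.exp_add, show ((k+1:ℕ):ℝ)*β + -((k+1:ℕ):ℝ)*β = 0 by ring, Real.exp_zero]
      have ha2 : Real.exp ((k+1:ℕ):ℝ) * (v/4) ≤ A (k+1) / 2 := by
        have h1 := hexp1 (k+1)
        simp only [hAdef]
        nlinarith [hvpos]
      have hP1 : Real.exp (((k+1:ℕ):ℝ)*β) * (v/4)^β ≤ (A (k+1)/2)^β := by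
        have hh := Real.rpow_le_rpow (by positivity) ha2 hβpos.le
        rwa [Real.mul_rpow (Real.exp_pos _).le (by positivity), ← Real.exp_mul] at hh
      have hQP : (v/4)^β * w * ((k+1:ℕ):ℝ)^(-σ) ≤ (A (k+1)/2)^β * (w * cseq β σ (k+1)) := by
        have h2 : (0:ℝ) ≤ w * (Real.exp (-((k+1:ℕ):ℝ)*β) * ((k+1:ℕ):ℝ)^(-σ)) := by
          positivity
        calc (v/4)^β * w * ((k+1:ℕ):ℝ)^(-σ)
            = (Real.exp (((k+1:ℕ):ℝ)*β) * (v/4)^β)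
                * (w * (Real.exp (-((k+1:ℕ):ℝ)*β) * ((k+1:ℕ):ℝ)^(-σ))) := by
              have hr : (Real.exp (((k+1:ℕ):ℝ)*β) * (v/4)^β)
                  * (w * (Real.exp (-((k+1:ℕ):ℝ)*β) * ((k+1:ℕ):ℝ)^(-σ)))
                  = (Real.exp (((k+1:ℕ):ℝ)*β) * Real.exp (-((k+1:ℕ):ℝ)*β))
                    * ((v/4)^β * w * ((k+1:ℕ):ℝ)^(-σ)) := by ring
              rw [hr, hexpc, one_mul]
          _ ≤ (A (k+1)/2)^β * (w * (Real.exp (-((k+1:ℕ):ℝ)*β) * ((k+1:ℕ):ℝ)^(-σ))) :=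
              mul_le_mul_of_nonneg_right hP1 h2
          _ = (A (k+1)/2)^β * (w * cseq β σ (k+1)) := rfl
      have hQr : ((v/4)^β * w * ((k+1:ℕ):ℝ)^(-σ))^r
          = (v/4)^(β*r) * w^r * ((k+1:ℕ):ℝ)⁻¹ := by
        rw [Real.mul_rpow (by positivity) (Real.rpow_nonneg (Nat.cast_nonneg _) _),
          Real.mul_rpow (Real.rpow_nonneg (by positivity) _) hwpos.le,
          ← Real.rpow_mul (by positivity : (0:ℝ) ≤ v/4),
          ← Real.rpow_mul (Nat.cast_nonneg _)]
        congr 1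
        rw [show -σ * r = (-1:ℝ) by rw [hσdef]; field_simp, Real.rpow_neg_one]
      have hPr : (v/4)^(β*r) * w^r * ((k+1:ℕ):ℝ)⁻¹
          ≤ ((A (k+1)/2)^β * (w * cseq β σ (k+1)))^r := by
        rw [← hQr]
        apply Real.rpow_le_rpow ?_ hQP hrpos.le
        positivity
      rw [hKdef]
      have hpos : (0:ℝ) < ((k+1:ℕ):ℝ)⁻¹ := by positivity
      calc (v/4) ^ (β*r) * w ^ r / 2 * ((k+1:ℕ):ℝ)⁻¹
          = ((v/4) ^ (β*r) * w ^ r * ((k+1:ℕ):ℝ)⁻¹) / 2 := by ring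
        _ ≤ ((A (k+1)/2)^β * (w * cseq β σ (k+1)))^r / 2 := by linarith
    calc ENNReal.ofReal (K * ((k+1:ℕ):ℝ)⁻¹)
        ≤ (ENNReal.ofReal (A (k+1)/2) ^ β * ENNReal.ofReal (w * cseq β σ (k+1))) ^ r
          / ENNReal.ofReal (A (k+1)) * ENNReal.ofReal (A (k+1)/2) := hmain
      _ = ∫⁻ _ in I k, ((ENNReal.ofReal (A (k+1)/2) ^ β
            * ENNReal.ofReal (w * cseq β σ (k+1))) ^ r / ENNReal.ofReal (A (k+1))) :=
          hIvol.symm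
      _ ≤ ∫⁻ t in I k, (ENNReal.ofReal t ^ β * rearr volume φ (ENNReal.ofReal t)) ^ r
            / ENNReal.ofReal t := setLIntegral_mono' measurableSet_Ioo hpt
  -- sum the lower bounds
  have hchain : (∑' k : ℕ, ENNReal.ofReal (K * ((k+1:ℕ):ℝ)⁻¹))
      ≤ ∫⁻ t in Ioi (0:ℝ),
        (ENNReal.ofReal t ^ β * rearr volume φ (ENNReal.ofReal t)) ^ r / ENNReal.ofReal t :=
    calc (∑' k : ℕ, ENNReal.ofReal (K * ((k+1:ℕ):ℝ)⁻¹))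
        ≤ ∑' k : ℕ, ∫⁻ t in I k,
            (ENNReal.ofReal t ^ β * rearr volume φ (ENNReal.ofReal t)) ^ r
              / ENNReal.ofReal t := ENNReal.tsum_le_tsum hterm
      _ = ∫⁻ t in ⋃ k, I k,
            (ENNReal.ofReal t ^ β * rearr volume φ (ENNReal.ofReal t)) ^ r
              / ENNReal.ofReal t :=
          (lintegral_iUnion (fun k => measurableSet_Ioo) hdisj _).symm
      _ ≤ _ := lintegral_mono_set hIsub
  have hsumtop : (∑' k : ℕ, ENNReal.ofReal (K * ((k+1:ℕ):ℝ)⁻¹)) = ⊤ := by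
    have h1 : ∀ k : ℕ, ENNReal.ofReal (K * ((k+1:ℕ):ℝ)⁻¹)
        = ENNReal.ofReal K * ENNReal.ofReal (((k+1:ℕ):ℝ)⁻¹) := fun k =>
      ENNReal.ofReal_mul hKpos.le
    rw [tsum_congr h1, ENNReal.tsum_mul_left]
    have h2 : (∑' k : ℕ, ENNReal.ofReal (((k+1:ℕ):ℝ)⁻¹)) = ⊤ := by
      by_contra hne
      have h3 : Summable (fun k : ℕ => (((k+1:ℕ):ℝ)⁻¹).toNNReal) :=
        ENNReal.tsum_coe_ne_top_iff_summable.mp hne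
      have h4 : Summable (fun k : ℕ => ((k+1:ℕ):ℝ)⁻¹) := by
        have h5 := NNReal.summable_coe.mpr h3
        apply h5.congr
        intro k
        exact Real.coe_toNNReal _ (by positivity)
      have h6 : Summable (fun m : ℕ => ((m:ℕ):ℝ)⁻¹) := by
        apply (summable_nat_add_iff 1).mp
        exact_mod_cast h4
      exact Real.not_summable_natCast_inv (by exact_mod_cast h6)
    rw [h2, ENNReal.mul_top (ENNReal.ofReal_pos.mpr hKpos).ne']
  exact top_le_iff.mp (hsumtop ▸ hchain)

end YoungAux
/-- The generalized Young inequality fails when the second index on the left is smaller: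
for `0 < s < l ≤ ∞` and `1 < q < ∞`, there is no finite constant `C` with
`‖f ∗ g‖_{L^{q,s}} ≤ C ‖f‖_{L^{q,l}} ‖g‖_{L^1}` for all `f ∈ L^{q,l}`, `g ∈ L^1`. -/
theorem young_lorentz_fails {n : ℕ} (hn : 0 < n) (q s l : ℝ≥0∞)
    (hs : 0 < s) (hsl : s < l) (hq1 : 1 < q) (hq2 : q < ⊤) :
    ¬ ∃ C : ℝ≥0∞, C ≠ ⊤ ∧
      ∀ f g : EuclideanSpace ℝ (Fin n) → ℂ, Measurable f →
        eLorentzNorm volume f q l ≠ ⊤ → MemLp g 1 volume →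
        eLorentzNorm volume (convFn f g) q s ≤
          C * eLorentzNorm volume f q l * eLpNorm g 1 volume := by
  rintro ⟨C, hC, hineq⟩
  have hst : s ≠ ⊤ := ne_top_of_lt hsl
  have hrpos : 0 < s.toReal := ENNReal.toReal_pos hs.ne' hst
  have hσpos : 0 < (s.toReal)⁻¹ := inv_pos.mpr hrpos
  have hl : l ≠ ⊤ → 1 < (s.toReal)⁻¹ * l.toReal := by
    intro hltop
    have hL : s.toReal < l.toReal := (ENNReal.toReal_lt_toReal hst hltop).mpr hsl
    rw [show (s.toReal)⁻¹ * l.toReal = l.toReal / s.toReal by ring]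
    exact (one_lt_div hrpos).mpr hL
  have hffin := YoungAux.lorentz_fF_ne_top (n := n) ⟨0, hn⟩ hq1 hq2 hσpos hl
  have hg := YoungAux.memLp_gF (n := n) hn
  have h := hineq (YoungAux.fF n ⟨0, hn⟩ (q⁻¹).toReal (s.toReal)⁻¹) (YoungAux.gF n)
    (YoungAux.measurable_fF _ _ _) hffin hg
  rw [YoungAux.lorentz_conv_top hn ⟨0, hn⟩ hq1 hq2 hs hst] at h
  exact (ENNReal.mul_ne_top (ENNReal.mul_ne_top hC hffin) hg.eLpNorm_lt_top.ne)
    (top_le_iff.mp h)
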